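/- Let F be the free group on generators x_0, …, x_{q-1} (q ≥ 2), and let φ : F → F ≀ Sym(Fin q) = (Fin q → F) ⋊ Equiv.Perm (Fin q) be the group homomorphism defined by φ(x_0) = ((j ↦ x_j), σ) and φ(x_i) = ((j ↦ 1), σ) for i ≥ 1, where σ is the cyclic permutation j ↦ j+1. Let θ : F → F be the endomorphism with θ(x_i) = x_i x_{i+1} ⋯ x_{i-1} (the product of all q generators in cyclic order starting at i) and let γ : F → F be the automorphism with γ(x_i) = x_{i+1 mod q}. Then for every w ∈ F, φ(θ(w)) = ((j ↦ γ^j(w)), 1), i.e. the permutation part of φ(θ(w)) is trivial and its j-th coordinate is γ^j(w). -/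

import Mathlib

/-- The permutation action of `Equiv.Perm (Fin q)` on `Fin q → G` by permuting
coordinates, as a homomorphism to `MulAut`. -/
def permAut (q : ℕ) (G : Type*) [Group G] :
    Equiv.Perm (Fin q) →* MulAut (Fin q → G) where
  toFun σ :=
    { toFun := fun f => f ∘ σ.symm
      invFun := fun f => f ∘ σ
      left_inv := fun f => by ext j; simp
      right_inv := fun f => by ext j; simp
      map_mul' := fun f g => rfl }
  map_one' := by ext f j; rfl
  map_mul' := fun σ τ => by ext f j; rfl

/-- The permutational wreath product `G ≀ Sym(Fin q)`. -/
abbrev Wreath (q : ℕ) (G : Type*) [Group G] :=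
  (Fin q → G) ⋊[permAut q G] Equiv.Perm (Fin q)

/-- The Thue–Morse self-similarity decomposition
`φ : F → F ≀ Sym(Fin q)`, with `φ(x_0) = ⟨x_0,…,x_{q-1}⟩σ` and
`φ(x_i) = ⟨1,…,1⟩σ` for `i ≥ 1`, where `σ : j ↦ j + 1 (mod q)`. -/
noncomputable def phiW (q : ℕ) [NeZero q] :
    FreeGroup (Fin q) →* Wreath q (FreeGroup (Fin q)) :=
  FreeGroup.lift fun i : Fin q =>
    ⟨if i = 0 then (fun j => FreeGroup.of j) else 1, Equiv.addRight (1 : Fin q)⟩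

/-- The Thue–Morse substitution `θ` extended to the free group:
`θ(x_i) = x_i x_{i+1} ⋯ x_{i-1}`. -/
noncomputable def tmF (q : ℕ) [NeZero q] : FreeGroup (Fin q) →* FreeGroup (Fin q) :=
  FreeGroup.lift fun i : Fin q => (List.ofFn fun j : Fin q => FreeGroup.of (i + j)).prod

/-- The automorphism `γ` of the free group permuting the generators cyclically,
`x_i ↦ x_{i+1 mod q}`. -/
noncomputable def cycF (q : ℕ) [NeZero q] : FreeGroup (Fin q) →* FreeGroup (Fin q) :=
  FreeGroup.lift fun i : Fin q => FreeGroup.of (i + 1)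

open Fin.NatCast Fin.CommRing

lemma permAut_apply (q : ℕ) (G : Type*) [Group G] (σ : Equiv.Perm (Fin q))
    (f : Fin q → G) (j : Fin q) : permAut q G σ f j = f (σ.symm j) := rfl

lemma addRight_mul (q : ℕ) [NeZero q] (a b : Fin q) :
    Equiv.addRight a * Equiv.addRight b = Equiv.addRight (a + b) := by
  apply Equiv.ext; intro x
  simp [Equiv.Perm.mul_apply]
  ring

lemma key (q : ℕ) [NeZero q] (i : Fin q) :
    ∀ n : ℕ, n ≤ q →
      phiW q (((List.range n).map fun k : ℕ => FreeGroup.of (i + (k : Fin q))).prod) =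
        ⟨fun j => if ((-i : Fin q) : ℕ) < n then FreeGroup.of (i + j) else 1,
          Equiv.addRight (n : Fin q)⟩ := by
  intro n
  induction n with
  | zero =>
    intro _
    simp only [List.range_zero, List.map_nil, List.prod_nil, map_one, Nat.cast_zero]
    refine SemidirectProduct.ext ?_ ?_
    · funext j
      simp [SemidirectProduct.one_left]
    · show (1 : Equiv.Perm (Fin q)) = Equiv.addRight (0 : Fin q)
      apply Equiv.ext; intro x; simp
  | succ n ih =>
    intro hn
    have hn' : n < q := hn
    rw [List.range_succ, List.map_append, List.prod_append, map_mul, ih hn'.le]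
    simp only [List.map_cons, List.map_nil, List.prod_cons, List.prod_nil, mul_one]
    rw [phiW, FreeGroup.lift_apply_of]
    refine SemidirectProduct.ext ?_ ?_
    · funext j
      rw [SemidirectProduct.mul_left]
      rw [Pi.mul_apply]
      show _ * permAut q _ _ _ j = _
      rw [permAut_apply]
      by_cases h : i + (n : Fin q) = 0
      · have hneg : (-i : Fin q) = (n : Fin q) := by
          exact neg_eq_of_add_eq_zero_right h
        have hval : ((-i : Fin q) : ℕ) = n := by
          rw [hneg, Fin.val_cast_of_lt hn']
        show (if ((-i : Fin q) : ℕ) < n then FreeGroup.of (i + j) else 1) *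
            (if i + (n : Fin q) = 0 then (fun j => FreeGroup.of j) else 1)
              ((Equiv.addRight ((n : ℕ) : Fin q)).symm j) =
          if ((-i : Fin q) : ℕ) < n + 1 then FreeGroup.of (i + j) else 1
        rw [if_pos h, if_neg (by omega : ¬ ((-i : Fin q) : ℕ) < n),
          if_pos (by omega : ((-i : Fin q) : ℕ) < n + 1), one_mul]
        congr 1
        rw [Equiv.addRight_symm]
        show j + -((n : ℕ) : Fin q) = i + j
        rw [← hneg, neg_neg, add_comm]
      · have hne : ((-i : Fin q) : ℕ) ≠ n := by
          intro hc
          apply h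
          have h1 : (-i : Fin q) = ((n : ℕ) : Fin q) := by
            rw [← hc, Fin.cast_val_eq_self]
          rw [← h1, add_neg_cancel]
        show (if ((-i : Fin q) : ℕ) < n then FreeGroup.of (i + j) else 1) *
            (if i + (n : Fin q) = 0 then (fun j => FreeGroup.of j) else 1)
              ((Equiv.addRight ((n : ℕ) : Fin q)).symm j) =
          if ((-i : Fin q) : ℕ) < n + 1 then FreeGroup.of (i + j) else 1
        rw [if_neg h]
        show _ * (1 : FreeGroup (Fin q)) = _
        rw [mul_one]
        rw [if_congr (by omega : (((-i : Fin q) : ℕ) < n ↔ ((-i : Fin q) : ℕ) < n + 1)) rfl rfl]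
    · rw [SemidirectProduct.mul_right]
      show Equiv.addRight _ * Equiv.addRight _ = _
      rw [addRight_mul]
      congr 1
      push_cast
      ring


lemma cyc_iter (q : ℕ) [NeZero q] (n : ℕ) (i : Fin q) :
    (⇑(cycF q))^[n] (FreeGroup.of i) = FreeGroup.of (i + (n : Fin q)) := by
  induction n with
  | zero => simp
  | succ n ih =>
    rw [Function.iterate_succ_apply', ih, cycF, FreeGroup.lift_apply_of]
    push_cast
    ring_nf

lemma ofFn_eq_range_map (q : ℕ) [NeZero q] (i : Fin q) :
    (List.ofFn fun j : Fin q => FreeGroup.of (i + j)) =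
      (List.range q).map fun k : ℕ => FreeGroup.of (i + (k : Fin q)) := by
  apply List.ext_getElem
  · simp
  · intro k h1 h2
    simp only [List.getElem_ofFn, List.getElem_map, List.getElem_range]
    congr 1
    have hk : k < q := by simpa using h1
    ext
    simp [Fin.val_add, Fin.val_cast_of_lt hk]

lemma gen_case (q : ℕ) [NeZero q] (i : Fin q) :
    phiW q (tmF q (FreeGroup.of i)) =
      ⟨fun j : Fin q => FreeGroup.of (i + j), 1⟩ := by
  rw [tmF, FreeGroup.lift_apply_of, ofFn_eq_range_map, key q i q le_rfl]
  refine SemidirectProduct.ext ?_ ?_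
  · funext j
    show (if ((-i : Fin q) : ℕ) < q then FreeGroup.of (i + j) else 1) = _
    rw [if_pos (Fin.is_lt _)]
  · show Equiv.addRight ((q : ℕ) : Fin q) = 1
    have : ((q : ℕ) : Fin q) = 0 := by
      ext; simp
    rw [this]
    apply Equiv.ext; intro x
    simp

theorem stmt_4 (q : ℕ) [NeZero q] (hq : 2 ≤ q) (w : FreeGroup (Fin q)) :
    phiW q (tmF q w) =
      ⟨fun j : Fin q => (⇑(cycF q))^[(j : ℕ)] w, 1⟩ := by
  let R : FreeGroup (Fin q) →* Wreath q (FreeGroup (Fin q)) :=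
    { toFun := fun w => ⟨fun j : Fin q => (⇑(cycF q))^[(j : ℕ)] w, 1⟩
      map_one' := by
        refine SemidirectProduct.ext ?_ rfl
        funext j
        show (⇑(cycF q))^[(j : ℕ)] 1 = 1
        rw [iterate_map_one (cycF q)]
      map_mul' := fun a b => by
        refine SemidirectProduct.ext ?_ ?_
        · funext j
          rw [SemidirectProduct.mul_left]
          show (⇑(cycF q))^[(j : ℕ)] (a * b) = _
          rw [iterate_map_mul (cycF q)]
          simp only [map_one, MulAut.one_apply, Pi.mul_apply]
        · rw [SemidirectProduct.mul_right]
          exact (one_mul _).symm }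
  have hhom : (phiW q).comp (tmF q) = R := by
    apply FreeGroup.ext_hom
    intro i
    show phiW q (tmF q (FreeGroup.of i)) = _
    rw [gen_case q i]
    refine SemidirectProduct.ext ?_ rfl
    funext j
    show FreeGroup.of (i + j) = (⇑(cycF q))^[(j : ℕ)] (FreeGroup.of i)
    rw [cyc_iter, Fin.cast_val_eq_self]
  exact DFunLike.congr_fun hhom w
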